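/- Let G be a finite simple graph with no isolated vertices such that γ_t(G) = 2γ(G), let S be a minimum dominating set (γ-set) of G, let H be a finite simple graph, and let S' be a minimum dominating set of H with |S'| = 2. Then S × S' is a minimum dominating set (γ-set) of the lexicographic product G∘H. -/

import Mathlib

open Finset

variable {α β : Type*}

/-- `D` is a dominating set of `G`: every vertex outside `D` has a neighbor in `D`. -/
def IsDomSet (G : SimpleGraph α) (D : Finset α) : Prop :=
  ∀ v ∉ D, ∃ u ∈ D, G.Adj u v

/-- The domination number `γ(G)`: minimum cardinality of a dominating set. -/
noncomputable def domNum (G : SimpleGraph α) : ℕ :=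
  sInf {n | ∃ D : Finset α, IsDomSet G D ∧ D.card = n}

/-- The degree of vertex `v` in `G`. -/
noncomputable def vdeg (G : SimpleGraph α) (v : α) : ℕ :=
  Nat.card (G.neighborSet v)

/-- The (domination) cover number of a set of vertices `A`: the sum of degrees. -/
noncomputable def coverNum (G : SimpleGraph α) (A : Finset α) : ℕ :=
  ∑ v ∈ A, vdeg G v

/-- `D` is a minimum dominating set (γ-set) of `G`. -/
def IsGammaSet (G : SimpleGraph α) (D : Finset α) : Prop :=
  IsDomSet G D ∧ D.card = domNum G

/-- `S` is a total dominating set of `G`: every vertex has a neighbor in `S`. -/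
def IsTotalDomSet (G : SimpleGraph α) (S : Finset α) : Prop :=
  ∀ v, ∃ u ∈ S, G.Adj u v

/-- The total domination number `γ_t(G)`. -/
noncomputable def totalDomNum (G : SimpleGraph α) : ℕ :=
  sInf {n | ∃ S : Finset α, IsTotalDomSet G S ∧ S.card = n}

/-- The lexicographic product `G ∘ H` of two simple graphs. -/
def lexProd (G : SimpleGraph α) (H : SimpleGraph β) : SimpleGraph (α × β) where
  Adj a b := G.Adj a.1 b.1 ∨ (a.1 = b.1 ∧ H.Adj a.2 b.2)
  symm := by
    constructor
    rintro a b (h | ⟨h1, h2⟩)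
    · exact Or.inl h.symm
    · exact Or.inr ⟨h1.symm, h2.symm⟩
  loopless := by
    constructor
    rintro a (h | ⟨_, h⟩)
    · exact G.loopless.irrefl _ h
    · exact H.loopless.irrefl _ h

lemma totalDomNum_le_card_of_lexDomSet [Fintype α] [Fintype β]
    (G : SimpleGraph α) (H : SimpleGraph β)
    (hG : ∀ v : α, ∃ u, G.Adj v u) (x0 : β)
    (h2 : ∀ Da : Finset β, IsDomSet H Da → 2 ≤ Da.card)
    (D : Finset (α × β)) (hD : IsDomSet (lexProd G H) D) :
    totalDomNum G ≤ D.card := by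
  classical
  set D1 : Finset α := D.image Prod.fst with hD1
  set B : Finset α := D1.filter (fun a => ¬ ∃ u ∈ D1, G.Adj u a) with hB
  choose f hf using hG
  set T : Finset α := D1 ∪ B.image f with hT
  have hTtd : IsTotalDomSet G T := by
    intro v
    by_cases hv : ∃ u ∈ D1, G.Adj u v
    · obtain ⟨u, hu, huv⟩ := hv
      exact ⟨u, Finset.mem_union_left _ hu, huv⟩
    · have hvD1 : v ∈ D1 := by
        by_contra hvn
        obtain ⟨⟨b, z⟩, hbz, hadj⟩ := hD (v, x0) (by
          intro hmem
          exact hvn (Finset.mem_image.mpr ⟨(v, x0), hmem, rfl⟩))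
        rcases hadj with h | ⟨h1, _⟩
        · exact hv ⟨b, Finset.mem_image.mpr ⟨(b, z), hbz, rfl⟩, h⟩
        · exact hvn (Finset.mem_image.mpr ⟨(b, z), hbz, h1⟩)
      have hvB : v ∈ B := Finset.mem_filter.mpr ⟨hvD1, hv⟩
      exact ⟨f v, Finset.mem_union_right _ (Finset.mem_image.mpr ⟨v, hvB, rfl⟩),
        (hf v).symm⟩
  have hle1 : totalDomNum G ≤ T.card := Nat.sInf_le ⟨T, hTtd, rfl⟩
  have hcard : D.card = ∑ a ∈ D1, (D.filter (fun p => p.1 = a)).card :=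
    Finset.card_eq_sum_card_image Prod.fst D
  have h1 : ∀ a ∈ D1, 1 ≤ (D.filter (fun p => p.1 = a)).card := by
    intro a ha
    obtain ⟨p, hp, hpa⟩ := Finset.mem_image.mp ha
    exact Finset.card_pos.mpr ⟨p, Finset.mem_filter.mpr ⟨hp, hpa⟩⟩
  have hBfib : ∀ a ∈ B, 2 ≤ (D.filter (fun p => p.1 = a)).card := by
    intro a ha
    have haB := Finset.mem_filter.mp ha
    set Da : Finset β := (D.filter (fun p => p.1 = a)).image Prod.snd with hDa
    have hDadom : IsDomSet H Da := by
      intro y hy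
      have hay : (a, y) ∉ D := by
        intro hmem
        exact hy (Finset.mem_image.mpr ⟨(a, y),
          Finset.mem_filter.mpr ⟨hmem, rfl⟩, rfl⟩)
      obtain ⟨⟨b, z⟩, hbz, hadj⟩ := hD (a, y) hay
      rcases hadj with h | ⟨h1, h2'⟩
      · exact absurd ⟨b, Finset.mem_image.mpr ⟨(b, z), hbz, rfl⟩, h⟩ haB.2
      · exact ⟨z, Finset.mem_image.mpr ⟨(b, z),
          Finset.mem_filter.mpr ⟨hbz, h1⟩, rfl⟩, h2'⟩
    calc 2 ≤ Da.card := h2 Da hDadom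
    _ ≤ _ := Finset.card_image_le
  have hsum1 : (D1.filter (fun a => ¬ ∃ u ∈ D1, G.Adj u a)).card * 2 ≤
      ∑ a ∈ D1.filter (fun a => ¬ ∃ u ∈ D1, G.Adj u a),
        (D.filter (fun p => p.1 = a)).card := by
    rw [← smul_eq_mul]
    exact Finset.card_nsmul_le_sum _ _ _ (fun a ha => hBfib a (hB ▸ ha))
  have hsum2 : (D1.filter (fun a => ¬¬ ∃ u ∈ D1, G.Adj u a)).card * 1 ≤
      ∑ a ∈ D1.filter (fun a => ¬¬ ∃ u ∈ D1, G.Adj u a),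
        (D.filter (fun p => p.1 = a)).card := by
    rw [← smul_eq_mul]
    exact Finset.card_nsmul_le_sum _ _ _
      (fun a ha => h1 a (Finset.mem_filter.mp ha).1)
  have hsplit : ∑ a ∈ D1.filter (fun a => ¬ ∃ u ∈ D1, G.Adj u a),
        (D.filter (fun p => p.1 = a)).card
      + ∑ a ∈ D1.filter (fun a => ¬¬ ∃ u ∈ D1, G.Adj u a),
        (D.filter (fun p => p.1 = a)).card
      = ∑ a ∈ D1, (D.filter (fun p => p.1 = a)).card :=
    Finset.sum_filter_add_sum_filter_not _ _ _
  have hcardsplit : (D1.filter (fun a => ¬ ∃ u ∈ D1, G.Adj u a)).card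
      + (D1.filter (fun a => ¬¬ ∃ u ∈ D1, G.Adj u a)).card = D1.card :=
    Finset.card_filter_add_card_filter_not _
  have hTcard : T.card ≤ D1.card + B.card := by
    calc T.card ≤ D1.card + (B.image f).card := Finset.card_union_le _ _
    _ ≤ D1.card + B.card := by
        exact Nat.add_le_add_left Finset.card_image_le _
  have hBcard : B.card = (D1.filter (fun a => ¬ ∃ u ∈ D1, G.Adj u a)).card := by
    rw [hB]
  omega

/-- If `G` has no isolated vertices, `γ_t(G) = 2γ(G)`, `S` is a γ-set of `G`, and
`S'` is a minimum dominating set of `H` of cardinality 2, then `S × S'` is a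
minimum dominating set of `G ∘ H`. -/
theorem lexProd_gammaSet_prod [Fintype α] [Fintype β]
    (G : SimpleGraph α) (H : SimpleGraph β)
    (hG : ∀ v : α, ∃ u, G.Adj v u) (ht : totalDomNum G = 2 * domNum G)
    (S : Finset α) (hS : IsGammaSet G S)
    (S' : Finset β) (hS' : IsDomSet H S') (hS'min : S'.card = domNum H)
    (hS'2 : S'.card = 2) :
    IsGammaSet (lexProd G H) (S ×ˢ S') := by
  classical
  have hS'ne : S'.Nonempty := Finset.card_pos.mp (by omega)
  obtain ⟨x0, hx0⟩ := hS'ne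
  have hdom : IsDomSet (lexProd G H) (S ×ˢ S') := by
    rintro ⟨a, x⟩ hax
    rw [Finset.mem_product] at hax
    by_cases ha : a ∈ S
    · have hx : x ∉ S' := fun h => hax ⟨ha, h⟩
      obtain ⟨u, hu, hux⟩ := hS' x hx
      exact ⟨(a, u), Finset.mem_product.mpr ⟨ha, hu⟩, Or.inr ⟨rfl, hux⟩⟩
    · obtain ⟨u, hu, hua⟩ := hS.1 a ha
      exact ⟨(u, x0), Finset.mem_product.mpr ⟨hu, hx0⟩, Or.inl hua⟩
  have h2 : ∀ Da : Finset β, IsDomSet H Da → 2 ≤ Da.card := by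
    intro Da hDa
    have hle : domNum H ≤ Da.card := Nat.sInf_le ⟨Da, hDa, rfl⟩
    omega
  refine ⟨hdom, ?_⟩
  have hcardSS : (S ×ˢ S').card = 2 * domNum G := by
    rw [Finset.card_product, hS.2, hS'2]; ring
  have hmem : (S ×ˢ S').card ∈
      {n | ∃ D : Finset (α × β), IsDomSet (lexProd G H) D ∧ D.card = n} :=
    ⟨_, hdom, rfl⟩
  have hle : domNum (lexProd G H) ≤ (S ×ˢ S').card := Nat.sInf_le hmem
  have hge : 2 * domNum G ≤ domNum (lexProd G H) := by
    obtain ⟨D, hD, hDc⟩ := Nat.sInf_mem (⟨_, hmem⟩ : Set.Nonempty _)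
    calc 2 * domNum G = totalDomNum G := ht.symm
    _ ≤ D.card := totalDomNum_le_card_of_lexDomSet G H hG x0 h2 D hD
    _ = _ := hDc
  omega
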